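/- Let φ₁, φ₂ ∈ ℂ^{Fin m × Fin k} be unit vectors such that the partial trace over the second factor of |φ₁⟩⟨φ₁| equals the partial trace over the second factor of |φ₂⟩⟨φ₂|. Then there exists a unitary k×k complex matrix U such that (1 ⊗ U)·φ₂ = φ₁, where 1 ⊗ U is the Kronecker product of the m×m identity matrix with U acting on the vector φ₂. (Lo–Chau/Mayers: purifications with the same reduced density matrix are related by a local unitary.) -/

import Mathlib

open Matrix BigOperators Kronecker
open scoped ComplexOrder

noncomputable section
open Classical

/-- The positive semidefinite square root of a matrix (junk value `0` if not PSD). -/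
def msqrt {d : Type*} [Fintype d] [DecidableEq d] (A : Matrix d d ℂ) : Matrix d d ℂ :=
  if h : A.PosSemidef then
    (h.1.eigenvectorUnitary : Matrix d d ℂ) * diagonal (((↑) : ℝ → ℂ) ∘ (Real.sqrt ·) ∘ h.1.eigenvalues) *
      (star h.1.eigenvectorUnitary : Matrix d d ℂ) else 0

/-- The trace norm `Tr √(AᴴA)` of a complex matrix. -/
def traceNorm {d : Type*} [Fintype d] [DecidableEq d] (A : Matrix d d ℂ) : ℝ :=
  ((msqrt (Aᴴ * A)).trace).re

/-- `ρ` is a density matrix: positive semidefinite with trace `1`. -/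
def IsDensityMatrix {d : Type*} [Fintype d] [DecidableEq d] (ρ : Matrix d d ℂ) : Prop :=
  ρ.PosSemidef ∧ ρ.trace = 1

/-- Von Neumann entropy, base 2 (junk value `0` if not Hermitian). -/
def vnEntropy {d : Type*} [Fintype d] [DecidableEq d] (ρ : Matrix d d ℂ) : ℝ :=
  if h : ρ.IsHermitian then -∑ i, (h.eigenvalues i) * Real.logb 2 (h.eigenvalues i) else 0

/-- The binary entropy function, base 2. -/
def binEntropy (p : ℝ) : ℝ := -p * Real.logb 2 p - (1 - p) * Real.logb 2 (1 - p)

/-- Fidelity of two matrices: `(Tr √(√ρ₁ ρ₂ √ρ₁))²`. -/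
def fidelity {d : Type*} [Fintype d] [DecidableEq d] (ρ₁ ρ₂ : Matrix d d ℂ) : ℝ :=
  (((msqrt (msqrt ρ₁ * ρ₂ * msqrt ρ₁)).trace).re) ^ 2

/-- Partial trace over the second tensor factor. -/
def ptraceSnd {m k : ℕ} (ρ : Matrix (Fin m × Fin k) (Fin m × Fin k) ℂ) :
    Matrix (Fin m) (Fin m) ℂ :=
  Matrix.of fun i j => ∑ l : Fin k, ρ (i, l) (j, l)

end


section LoChauAux

noncomputable section

variable {m k : ℕ}

lemma norm_toEuclideanLin_eq (A₁ A₂ : Matrix (Fin m) (Fin k) ℂ)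
    (h : A₁ * A₁ᴴ = A₂ * A₂ᴴ) (x : EuclideanSpace ℂ (Fin m)) :
    ‖Matrix.toEuclideanLin A₁ᴴ x‖ = ‖Matrix.toEuclideanLin A₂ᴴ x‖ := by
  have key : ∀ A : Matrix (Fin m) (Fin k) ℂ,
      (inner ℂ (Matrix.toEuclideanLin Aᴴ x) (Matrix.toEuclideanLin Aᴴ x) : ℂ)
        = star (WithLp.equiv 2 _ x) ⬝ᵥ ((A * Aᴴ) *ᵥ (WithLp.equiv 2 _ x)) := by
    intro A
    rw [PiLp.inner_apply]
    set v := WithLp.equiv 2 (Fin m → ℂ) x with hv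
    have happ : ∀ l, (Matrix.toEuclideanLin Aᴴ x) l = (Aᴴ *ᵥ v) l := fun l => rfl
    simp_rw [happ, RCLike.inner_apply]
    have : ∑ l, ((Aᴴ *ᵥ v) l) * (starRingEnd ℂ) ((Aᴴ *ᵥ v) l)
        = star (Aᴴ *ᵥ v) ⬝ᵥ (Aᴴ *ᵥ v) := by
      simp [dotProduct, mul_comm]
    rw [this, Matrix.star_mulVec, Matrix.conjTranspose_conjTranspose,
      ← Matrix.dotProduct_mulVec, Matrix.mulVec_mulVec]
  have h1 := key A₁
  have h2 := key A₂
  rw [h, ← h2] at h1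
  have hre := congrArg Complex.re h1
  rw [@norm_eq_sqrt_re_inner ℂ, @norm_eq_sqrt_re_inner ℂ]
  rw [h1]

end

lemma exists_unitary_mul_conjTranspose_eq (A₁ A₂ : Matrix (Fin m) (Fin k) ℂ)
    (h : A₁ * A₁ᴴ = A₂ * A₂ᴴ) :
    ∃ U' : Matrix (Fin k) (Fin k) ℂ, U' ∈ Matrix.unitaryGroup (Fin k) ℂ ∧
      U' * A₂ᴴ = A₁ᴴ := by
  set C : EuclideanSpace ℂ (Fin m) →ₗ[ℂ] EuclideanSpace ℂ (Fin k) :=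
    Matrix.toEuclideanLin A₁ᴴ with hC
  set D : EuclideanSpace ℂ (Fin m) →ₗ[ℂ] EuclideanSpace ℂ (Fin k) :=
    Matrix.toEuclideanLin A₂ᴴ with hD
  have hnorm : ∀ x, ‖C x‖ = ‖D x‖ := norm_toEuclideanLin_eq A₁ A₂ h
  have hker : LinearMap.ker D ≤ LinearMap.ker C := by
    intro x hx
    rw [LinearMap.mem_ker] at hx ⊢
    have : ‖C x‖ = 0 := by rw [hnorm, hx, norm_zero]
    exact norm_eq_zero.mp this
  -- the isometry from range D to the ambient space
  let Cbar : (EuclideanSpace ℂ (Fin m) ⧸ LinearMap.ker D) →ₗ[ℂ] EuclideanSpace ℂ (Fin k) :=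
    Submodule.liftQ (LinearMap.ker D) C hker
  let g : LinearMap.range D →ₗ[ℂ] EuclideanSpace ℂ (Fin k) :=
    Cbar ∘ₗ (D.quotKerEquivRange.symm : LinearMap.range D →ₗ[ℂ] _)
  have hg : ∀ x : EuclideanSpace ℂ (Fin m), ∀ hx, g ⟨D x, hx⟩ = C x := by
    intro x hx
    have h1 : D.quotKerEquivRange.symm ⟨D x, hx⟩ = Submodule.Quotient.mk x :=
      D.quotKerEquivRange_symm_apply_image x hx
    simp only [g, LinearMap.comp_apply, LinearEquiv.coe_coe, h1]
    rfl
  have gnorm : ∀ s : LinearMap.range D, ‖g s‖ = ‖s‖ := by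
    rintro ⟨-, x, rfl⟩
    rw [hg x (LinearMap.mem_range_self D x)]
    exact (hnorm x).trans rfl
  let L : LinearMap.range D →ₗᵢ[ℂ] EuclideanSpace ℂ (Fin k) := ⟨g, gnorm⟩
  let W := L.extend
  have hW : ∀ x, W (D x) = C x := by
    intro x
    have h1 := L.extend_apply ⟨D x, LinearMap.mem_range_self D x⟩
    rw [h1]
    exact hg x (LinearMap.mem_range_self D x)
  set U' : Matrix (Fin k) (Fin k) ℂ := Matrix.toEuclideanLin.symm W.toLinearMap with hU'
  have hUW : Matrix.toEuclideanLin U' = W.toLinearMap := Matrix.toEuclideanLin.apply_symm_apply _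
  have hWfun : ∀ y : EuclideanSpace ℂ (Fin k), ∀ l, W y l = (U' *ᵥ (fun i => y i)) l := by
    intro y l
    have := (DFunLike.congr_fun hUW y).symm
    exact congrFun (congrArg (fun (v : EuclideanSpace ℂ (Fin k)) => (v : Fin k → ℂ)) this) l
  refine ⟨U', ?_, ?_⟩
  · rw [Matrix.mem_unitaryGroup_iff']
    ext a b
    have col : ∀ c : Fin k, ∀ l, W (EuclideanSpace.single c 1) l = U' l c := by
      intro c l
      rw [hWfun]
      show (U' *ᵥ (Pi.single c 1)) l = U' l c
      simp [Matrix.mulVec_single]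
    have key := W.inner_map_map (EuclideanSpace.single a 1) (EuclideanSpace.single b 1)
    rw [PiLp.inner_apply, PiLp.inner_apply] at key
    simp only [col, RCLike.inner_apply, EuclideanSpace.single_apply] at key
    rw [Matrix.mul_apply, Matrix.one_apply]
    simp only [Matrix.star_apply, Matrix.conjTranspose_apply, RCLike.star_def]
    rw [show (∑ j, (starRingEnd ℂ) (U' j a) * U' j b) = ∑ x, U' x b * (starRingEnd ℂ) (U' x a) from
      Finset.sum_congr rfl fun x _ => mul_comm _ _, key]
    by_cases hab : a = b <;> simp [hab, eq_comm]
  · ext a j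
    have hx := hW (EuclideanSpace.single j 1)
    have e1 : W (D (EuclideanSpace.single j 1)) a
        = (U' *ᵥ (A₂ᴴ *ᵥ Pi.single j 1)) a := hWfun _ a
    have e2 : C (EuclideanSpace.single j 1) a = (A₁ᴴ *ᵥ Pi.single j 1) a := rfl
    have e3 : W (D (EuclideanSpace.single j 1)) a = C (EuclideanSpace.single j 1) a :=
      congrFun (congrArg (fun (v : EuclideanSpace ℂ (Fin k)) => (v : Fin k → ℂ)) hx) a
    have e4 := e1.symm.trans (e3.trans e2)
    rw [Matrix.mulVec_mulVec] at e4
    simpa [Matrix.mulVec_single] using e4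

open Kronecker in
private theorem local_unitary_of_eq_ptrace' (m k : ℕ) (φ₁ φ₂ : Fin m × Fin k → ℂ)
    (h : (Matrix.of fun i j => ∑ l : Fin k, Matrix.vecMulVec φ₁ (star φ₁) (i, l) (j, l)) =
         (Matrix.of fun i j => ∑ l : Fin k, Matrix.vecMulVec φ₂ (star φ₂) (i, l) (j, l))) :
    ∃ U : Matrix (Fin k) (Fin k) ℂ, U ∈ Matrix.unitaryGroup (Fin k) ℂ ∧
      ((1 : Matrix (Fin m) (Fin m) ℂ) ⊗ₖ U) *ᵥ φ₂ = φ₁ := by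
  set A₁ : Matrix (Fin m) (Fin k) ℂ := Matrix.of fun i l => φ₁ (i, l) with hA₁
  set A₂ : Matrix (Fin m) (Fin k) ℂ := Matrix.of fun i l => φ₂ (i, l) with hA₂
  have hAA : A₁ * A₁ᴴ = A₂ * A₂ᴴ := by
    ext i j
    have := congrFun (congrFun h i) j
    simpa [Matrix.mul_apply, Matrix.conjTranspose_apply, Matrix.vecMulVec_apply,
      hA₁, hA₂, Pi.star_apply] using this
  obtain ⟨U', hmem, hU'⟩ := exists_unitary_mul_conjTranspose_eq A₁ A₂ hAA
  refine ⟨U'ᴴᵀ, ?_, ?_⟩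
  · rw [Matrix.mem_unitaryGroup_iff']
    have h1 : U'ᴴ * U' = 1 := Matrix.mem_unitaryGroup_iff'.mp hmem
    have e : star (U'ᴴᵀ) = U'ᵀ := by
      rw [Matrix.star_eq_conjTranspose]
      ext a b
      simp
    rw [e, ← Matrix.transpose_mul, h1, Matrix.transpose_one]
  · have h2 : A₂ * U'ᴴ = A₁ := by
      have := congrArg Matrix.conjTranspose hU'
      simpa [Matrix.conjTranspose_mul] using this
    funext s
    obtain ⟨i, l⟩ := s
    have h3 := congrFun (congrFun h2 i) l
    show ∑ p : Fin m × Fin k, ((1 : Matrix (Fin m) (Fin m) ℂ) ⊗ₖ U'ᴴᵀ) (i, l) p * φ₂ p = φ₁ (i, l)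
    rw [Fintype.sum_prod_type]
    simp only [Matrix.kroneckerMap_apply, Matrix.one_apply, ite_mul, one_mul, zero_mul,
      Finset.sum_ite_irrel, Finset.sum_const_zero, Finset.sum_ite_eq, Finset.mem_univ, if_true]
    have h3' : (A₂ * U'ᴴ) i l = φ₁ (i, l) := h3
    rw [← h3']
    simp only [Matrix.mul_apply, Matrix.transpose_apply, hA₂, Matrix.of_apply]
    exact Finset.sum_congr rfl fun x _ => mul_comm _ _

end LoChauAux

/-- **Lo–Chau/Mayers.** Two purifications with the same reduced density matrix on
the first factor are related by a local unitary on the second factor. -/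
theorem local_unitary_of_eq_ptrace (m k : ℕ) (φ₁ φ₂ : Fin m × Fin k → ℂ)
    (hφ₁ : ∑ s, ‖φ₁ s‖ ^ 2 = 1) (hφ₂ : ∑ s, ‖φ₂ s‖ ^ 2 = 1)
    (h : ptraceSnd (Matrix.vecMulVec φ₁ (star φ₁)) =
         ptraceSnd (Matrix.vecMulVec φ₂ (star φ₂))) :
    ∃ U : Matrix (Fin k) (Fin k) ℂ, U ∈ Matrix.unitaryGroup (Fin k) ℂ ∧
      ((1 : Matrix (Fin m) (Fin m) ℂ) ⊗ₖ U) *ᵥ φ₂ = φ₁ := by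
  exact local_unitary_of_eq_ptrace' m k φ₁ φ₂ h
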